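/- Under the data-processing/change-of-measure framework: if for all events E in the stopped σ-algebra F_τ we have Q(E) = E_P[1_E·exp(−Z_τ)], and if A ∈ F_τ satisfies P(A) ≥ 1−ε and Q(A) ≤ ε for some ε ∈ (0, 1/2), then E_P[Z_τ] ≥ d(ε, 1−ε) = ε·log(ε/(1−ε)) + (1−ε)·log((1−ε)/ε), where d(x,y) is the binary relative entropy. -/

import Mathlib

open MeasureTheory


lemma aux_mulLog_tangent {x a : ℝ} (ha : 0 < a) (hx : 0 ≤ x) :
    a * Real.log a + (Real.log a + 1) * (x - a) ≤ x * Real.log x := by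
  rcases eq_or_lt_of_le hx with h | h
  · subst h; simp; nlinarith
  · have h1 : Real.log (a / x) ≤ a / x - 1 := Real.log_le_sub_one_of_pos (div_pos ha h)
    rw [Real.log_div ha.ne' h.ne'] at h1
    have h2 : x * (Real.log a - Real.log x) ≤ x * (a / x - 1) :=
      mul_le_mul_of_nonneg_left h1 h.le
    have h3 : x * (a / x - 1) = a - x := by field_simp
    nlinarith

lemma aux_mul_log_div {x y : ℝ} (hx : 0 ≤ x) (hy : 0 < y) :
    x * Real.log (x / y) = x * Real.log x - x * Real.log y := by
  rcases eq_or_lt_of_le hx with h | h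
  · subst h; simp
  · rw [Real.log_div h.ne' hy.ne']; ring

lemma aux_lemB {ε p : ℝ} (hε0 : 0 < ε) (hε12 : ε < 1/2) (hp : 1 - ε ≤ p) (hp1 : p ≤ 1) :
    ε * Real.log (ε / (1 - ε)) + (1 - ε) * Real.log ((1 - ε) / ε) ≤
      p * Real.log (p / ε) + (1 - p) * Real.log ((1 - p) / (1 - ε)) := by
  have hε1 : (0:ℝ) < 1 - ε := by linarith
  have hp0 : 0 < p := by linarith
  have hp' : 0 ≤ 1 - p := by linarith
  rw [aux_mul_log_div hε0.le hε1, aux_mul_log_div hε1.le hε0,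
      aux_mul_log_div hp0.le hε0, aux_mul_log_div hp' hε1]
  have t1 := aux_mulLog_tangent hε1 hp0.le
  have t2 := aux_mulLog_tangent hε0 hp'
  have hlog : Real.log ε ≤ Real.log (1 - ε) := Real.log_le_log hε0 (by linarith)
  nlinarith [mul_nonneg (sub_nonneg.mpr hp) (sub_nonneg.mpr hlog)]

lemma aux_lemA {ε p q : ℝ} (hε0 : 0 < ε) (hε12 : ε < 1/2) (hq0 : 0 < q) (hqε : q ≤ ε)
    (hp : 1 - ε ≤ p) (hp1 : p ≤ 1) :
    p * Real.log (p / ε) + (1 - p) * Real.log ((1 - p) / (1 - ε)) ≤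
      p * Real.log (p / q) + (1 - p) * Real.log ((1 - p) / (1 - q)) := by
  have hε1 : (0:ℝ) < 1 - ε := by linarith
  have hq1 : (0:ℝ) < 1 - q := by linarith
  have hp0 : 0 < p := by linarith
  have hp' : 0 ≤ 1 - p := by linarith
  rw [aux_mul_log_div hp0.le hε0, aux_mul_log_div hp' hε1,
      aux_mul_log_div hp0.le hq0, aux_mul_log_div hp' hq1]
  have h1 : Real.log (1 - ε) ≤ Real.log (1 - q) := Real.log_le_log hε1 (by linarith)
  have h2 : Real.log q + Real.log (1 - q) ≤ Real.log ε + Real.log (1 - ε) := by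
    rw [← Real.log_mul hq0.ne' hq1.ne', ← Real.log_mul hε0.ne' hε1.ne']
    exact Real.log_le_log (by positivity) (by nlinarith)
  have h3 : 1 - p ≤ p := by linarith
  nlinarith [mul_le_mul_of_nonneg_left h1 hp', mul_le_mul_of_nonneg_right h3 (sub_nonneg.mpr h1)]

/-- If `Q(E) = E_P[1_E exp(-W)]` for all events `E` in a sub-σ-algebra `m`
(with `W` the `m`-measurable log-likelihood ratio of `P` w.r.t. `Q`), and `A ∈ m` has
`P(A) ≥ 1-ε`, `Q(A) ≤ ε` for some `ε ∈ (0,1/2)`, then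
`E_P[W] ≥ d(ε,1-ε) = ε log(ε/(1-ε)) + (1-ε) log((1-ε)/ε)`. -/
theorem stmt18 {Ω : Type*} {m0 : MeasurableSpace Ω} (P Q : Measure Ω)
    [IsProbabilityMeasure P] [IsProbabilityMeasure Q]
    (m : MeasurableSpace Ω) (hm : m ≤ m0)
    (W : Ω → ℝ) (hWmeas : StronglyMeasurable[m] W) (hWint : Integrable W P)
    (hchange : ∀ E : Set Ω, MeasurableSet[m] E →
      (Q E).toReal = ∫ ω in E, Real.exp (-(W ω)) ∂P)
    (ε : ℝ) (hε0 : 0 < ε) (hε12 : ε < 1 / 2)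
    (A : Set Ω) (hA : MeasurableSet[m] A)
    (hPA : 1 - ε ≤ (P A).toReal) (hQA : (Q A).toReal ≤ ε) :
    ε * Real.log (ε / (1 - ε)) + (1 - ε) * Real.log ((1 - ε) / ε) ≤ ∫ ω, W ω ∂P := by
  have hA0 : MeasurableSet[m0] A := hm A hA
  set p : ℝ := (P A).toReal with hp_def
  set q : ℝ := (Q A).toReal with hq_def
  -- integrability of exp(-W)
  have hExpInt : Integrable (fun ω => Real.exp (-(W ω))) P := by
    by_contra h
    have h1 := hchange Set.univ MeasurableSet.univ
    rw [Measure.restrict_univ, integral_undef h] at h1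
    simp at h1
  -- tangent-line key inequality
  have key : ∀ S : Set Ω, MeasurableSet[m] S → ∀ t : ℝ,
      (1 - t) * (P S).toReal - Real.exp (-t) * (Q S).toReal ≤ ∫ ω in S, W ω ∂P := by
    intro S hS t
    have pt : ∀ ω, Real.exp t * (1 - t - W ω) ≤ Real.exp (-(W ω)) := by
      intro ω
      have h1 : 1 - t - W ω ≤ Real.exp (-(W ω) - t) := by
        have := Real.add_one_le_exp (-(W ω) - t); linarith
      calc Real.exp t * (1 - t - W ω) ≤ Real.exp t * Real.exp (-(W ω) - t) :=
            mul_le_mul_of_nonneg_left h1 (Real.exp_pos t).le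
        _ = Real.exp (-(W ω)) := by rw [← Real.exp_add]; ring_nf
    have hint1 : Integrable (fun ω => Real.exp t * (1 - t - W ω)) (P.restrict S) :=
      (((integrable_const (1 - t)).sub hWint.restrict).const_mul _)
    have hmono := integral_mono hint1 hExpInt.restrict pt
    have hcomp : ∫ ω in S, Real.exp t * (1 - t - W ω) ∂P
        = Real.exp t * ((1 - t) * (P S).toReal - ∫ ω in S, W ω ∂P) := by
      rw [integral_const_mul, integral_sub (integrable_const _) hWint.restrict,
        integral_const]
      simp [Measure.restrict_apply_univ, smul_eq_mul, Measure.real]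
      ring
    rw [hcomp, ← hchange S hS] at hmono
    have e1 : Real.exp (-t) * Real.exp t = 1 := by rw [← Real.exp_add]; simp
    have h2 := mul_le_mul_of_nonneg_left hmono (Real.exp_pos (-t)).le
    rw [← mul_assoc, e1, one_mul] at h2
    linarith
  -- basic real facts
  have hp1 : p ≤ 1 := by
    rw [hp_def]
    simpa using ENNReal.toReal_mono ENNReal.one_ne_top prob_le_one
  have hq0 : 0 < q := by
    rw [hq_def, hchange A hA]
    refine (integral_pos_iff_support_of_nonneg (fun ω => (Real.exp_pos _).le)
      hExpInt.restrict).mpr ?_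
    have hsupp : Function.support (fun ω => Real.exp (-(W ω))) = Set.univ := by
      ext ω; simp [Real.exp_ne_zero]
    rw [hsupp, Measure.restrict_apply_univ]
    have hPA' : (0:ℝ) < (P A).toReal := by linarith
    exact (ENNReal.toReal_pos_iff.mp hPA').1
  have hq1 : q < 1 := by linarith
  have hcP : (P Aᶜ).toReal = 1 - p := by
    rw [measure_compl hA0 (measure_ne_top P A), measure_univ,
      ENNReal.toReal_sub_of_le prob_le_one ENNReal.one_ne_top, ENNReal.toReal_one]
  have hcQ : (Q Aᶜ).toReal = 1 - q := by
    rw [measure_compl hA0 (measure_ne_top Q A), measure_univ,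
      ENNReal.toReal_sub_of_le prob_le_one ENNReal.one_ne_top, ENNReal.toReal_one]
  have hp0 : 0 < p := by linarith
  have hq1' : (0:ℝ) < 1 - q := by linarith
  -- bound on A
  have intA : p * Real.log (p / q) ≤ ∫ ω in A, W ω ∂P := by
    have hk := key A hA (Real.log q - Real.log p)
    have he : Real.exp (-(Real.log q - Real.log p)) = p / q := by
      rw [neg_sub, Real.exp_sub, Real.exp_log hp0, Real.exp_log hq0]
    rw [he] at hk
    have hpq : p / q * q = p := div_mul_cancel₀ p hq0.ne'
    rw [aux_mul_log_div hp0.le hq0]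
    rw [← hp_def, ← hq_def] at hk
    nlinarith
  -- bound on Aᶜ
  have intAc : (1 - p) * Real.log ((1 - p) / (1 - q)) ≤ ∫ ω in Aᶜ, W ω ∂P := by
    rcases eq_or_ne (P Aᶜ) 0 with hz | hz
    · have h1p : 1 - p = 0 := by rw [← hcP, hz]; simp
      rw [h1p, Measure.restrict_eq_zero.mpr hz, integral_zero_measure]
      simp
    · have hp' : 0 < 1 - p := by
        rw [← hcP]; exact ENNReal.toReal_pos hz (measure_ne_top _ _)
      have hk := key Aᶜ hA.compl (Real.log (1 - q) - Real.log (1 - p))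
      have he : Real.exp (-(Real.log (1 - q) - Real.log (1 - p))) = (1 - p) / (1 - q) := by
        rw [neg_sub, Real.exp_sub, Real.exp_log hp', Real.exp_log hq1']
      rw [he, hcP, hcQ] at hk
      have hpq : (1 - p) / (1 - q) * (1 - q) = 1 - p := div_mul_cancel₀ _ hq1'.ne'
      rw [aux_mul_log_div hp'.le hq1']
      nlinarith
  have hsplit : (∫ ω in A, W ω ∂P) + ∫ ω in Aᶜ, W ω ∂P = ∫ ω, W ω ∂P :=
    @integral_add_compl Ω ℝ m0 _ _ W A P hA0 hWint
  calc ε * Real.log (ε / (1 - ε)) + (1 - ε) * Real.log ((1 - ε) / ε)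
      ≤ p * Real.log (p / ε) + (1 - p) * Real.log ((1 - p) / (1 - ε)) :=
        aux_lemB hε0 (by linarith) hPA hp1
    _ ≤ p * Real.log (p / q) + (1 - p) * Real.log ((1 - p) / (1 - q)) :=
        aux_lemA hε0 (by linarith) hq0 hQA hPA hp1
    _ ≤ (∫ ω in A, W ω ∂P) + ∫ ω in Aᶜ, W ω ∂P := add_le_add intA intAc
    _ = ∫ ω, W ω ∂P := hsplit
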